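/- Let all edge weights satisfy w u v ≥ δ for a fixed real δ > 0, assume every vertex is reachable from the source s (d(v) < ∞ for all v), and let v_1, …, v_n be a bijective enumeration of V with v_1 = s that is a δ-partial-ordering (i < j implies d(v_i) < d(v_j) + δ). Then for every index j and every vertex v_k with an edge to v_j lying on a shortest path to v_j (i.e. d(v_j) = d(v_k) + w(v_k, v_j)), the predecessor appears earlier in the enumeration: k < j. -/

import Mathlib

open scoped ENNReal

/-- The length of the path `p 0, p 1, …, p k` in a graph on `Fin n` with
edge-weight function `w` (where `w u v = ∞` encodes the absence of an edge). -/
noncomputable def pathCost {n : ℕ} (w : Fin n → Fin n → ℝ≥0∞) (p : ℕ → Fin n) (k : ℕ) : ℝ≥0∞ :=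
  ∑ i ∈ Finset.range k, w (p i) (p (i + 1))

/-- The shortest-path distance from `s` to `v`: the infimum over all finite paths
from `s` to `v` of their lengths. -/
noncomputable def spDist {n : ℕ} (w : Fin n → Fin n → ℝ≥0∞) (s v : Fin n) : ℝ≥0∞ :=
  ⨅ (k : ℕ) (p : ℕ → Fin n) (_ : p 0 = s) (_ : p k = v), pathCost w p k

/-- Dijkstra's label recursion, processed according to the enumeration `e` (0-indexed):
`dijkstraD w s e 0` is the initial labelling (`0` at `s`, `∞` elsewhere), and step `j`
relaxes all edges out of the extracted vertex `e j`.  The paper's `D_j` is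
`dijkstraD w s e (j-1)`; the extraction value of `v_j` is `dijkstraD w s e (j-1) (e (j-1))`. -/
noncomputable def dijkstraD {n : ℕ} (w : Fin n → Fin n → ℝ≥0∞) (s : Fin n) (e : Fin n → Fin n) :
    ℕ → Fin n → ℝ≥0∞
  | 0 => fun u => if u = s then 0 else ⊤
  | j + 1 => fun u =>
      if h : j < n then
        min (dijkstraD w s e j u) (dijkstraD w s e j (e ⟨j, h⟩) + w (e ⟨j, h⟩) u)
      else dijkstraD w s e j u

/-- If all edge weights are at least `δ > 0`, every vertex is reachable from `s`,
and `e` is a bijective enumeration of the vertices starting at `s` that is a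
δ-partial-ordering (`i < j → d (e i) < d (e j) + δ`), then whenever the edge
`(e k, e j)` lies on a shortest path to `e j` (`d (e j) = d (e k) + w (e k) (e j)`),
the predecessor appears earlier in the enumeration: `k < j`. -/
theorem deltaPO_pred_earlier {n : ℕ} (hn : 0 < n) (w : Fin n → Fin n → ℝ≥0∞) (s : Fin n)
    (δ : ℝ) (hδ : 0 < δ) (hw : ∀ u v : Fin n, ENNReal.ofReal δ ≤ w u v)
    (hreach : ∀ v : Fin n, spDist w s v < ⊤)
    (e : Fin n → Fin n) (he : Function.Bijective e) (hes : e ⟨0, hn⟩ = s)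
    (hPO : ∀ i j : Fin n, i < j → spDist w s (e i) < spDist w s (e j) + ENNReal.ofReal δ)
    (j k : Fin n)
    (hedge : spDist w s (e j) = spDist w s (e k) + w (e k) (e j)) :
    k < j := by
  by_contra h
  push_neg at h
  rcases lt_or_eq_of_le h with hlt | heq
  · -- j < k : PO gives d(e j) < d(e k) + δ, but hedge gives d(e j) ≥ d(e k) + δ
    have h1 : spDist w s (e j) < spDist w s (e k) + ENNReal.ofReal δ := hPO j k hlt
    have h2 : spDist w s (e k) + ENNReal.ofReal δ ≤ spDist w s (e j) := by
      rw [hedge]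
      exact add_le_add le_rfl (hw _ _)
    exact absurd (lt_of_le_of_lt h2 h1) (lt_irrefl _)
  · -- j = k : d(e j) = d(e j) + w, so w = 0, contradicting w ≥ δ > 0
    subst heq
    have hfin : spDist w s (e j) ≠ ⊤ := (hreach (e j)).ne
    have hw0 : w (e j) (e j) = 0 := by
      have : spDist w s (e j) + 0 = spDist w s (e j) + w (e j) (e j) := by
        rw [add_zero]; exact hedge
      exact ((ENNReal.add_right_inj hfin).mp this).symm
    have : (0 : ℝ≥0∞) < ENNReal.ofReal δ := ENNReal.ofReal_pos.mpr hδ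
    have := lt_of_lt_of_le this (hw (e j) (e j))
    rw [hw0] at this
    exact absurd this (lt_irrefl _)
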